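/- Let U ⊆ ℝ² be open, m a positive integer, f : U → ℂ continuous, and define Φ : U × ℝ → ℝ by Φ(x,θ) = Re f(x)·cos(mθ) + Im f(x)·sin(mθ). Let k be an integer, let U₁ be a nonempty connected subset of U × {kπ/(2m)} and U₂ a nonempty connected subset of U × {(k+1)π/(2m)}, and suppose Φ > 0 on U₁ ∪ U₂ and that there exists x₀ ∈ U with (x₀, kπ/(2m)) ∈ U₁ and (x₀, (k+1)π/(2m)) ∈ U₂. Then U₁ ∪ U₂ is contained in a single connected component of {(x,θ) ∈ U × ℝ : Φ(x,θ) ≠ 0}. -/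

import Mathlib

/-- Let `U ⊆ ℝ²` be open, `m ≥ 1`, `f : U → ℂ` continuous, and
`Φ(x,θ) = Re f(x) cos(mθ) + Im f(x) sin(mθ)`.  If `U₁`, `U₂` are nonempty connected
subsets of `U × {kπ/(2m)}` and `U × {(k+1)π/(2m)}` respectively on which `Φ > 0`, and
there is `x₀ ∈ U` with `(x₀, kπ/(2m)) ∈ U₁` and `(x₀, (k+1)π/(2m)) ∈ U₂`, then
`U₁ ∪ U₂` lies in a single connected component of `{(x,θ) ∈ U × ℝ : Φ(x,θ) ≠ 0}`. -/
private lemma aux_pos (A B c s : ℝ) (hA : 0 < A) (hB : 0 < B) (hc : 0 ≤ c)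
    (hs : 0 ≤ s) (hcs : 1 ≤ c + s) : 0 < A * c + B * s := by
  rcases le_total A B with h | h
  · nlinarith [mul_nonneg (sub_nonneg.2 h) hs]
  · nlinarith [mul_nonneg (sub_nonneg.2 h) hc]

theorem stmt5 (U : Set (ℝ × ℝ)) (hU : IsOpen U) (m : ℕ) (hm : 0 < m)
    (f : ℝ × ℝ → ℂ) (hf : ContinuousOn f U) (k : ℤ)
    (U₁ U₂ : Set ((ℝ × ℝ) × ℝ))
    (hU₁sub : U₁ ⊆ U ×ˢ ({(k : ℝ) * Real.pi / (2 * m)} : Set ℝ))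
    (hU₂sub : U₂ ⊆ U ×ˢ ({((k : ℝ) + 1) * Real.pi / (2 * m)} : Set ℝ))
    (hU₁conn : IsConnected U₁) (hU₂conn : IsConnected U₂)
    (hpos : ∀ p ∈ U₁ ∪ U₂,
      0 < (f p.1).re * Real.cos (m * p.2) + (f p.1).im * Real.sin (m * p.2))
    (x₀ : ℝ × ℝ) (hx₀ : x₀ ∈ U)
    (hx₀₁ : (x₀, (k : ℝ) * Real.pi / (2 * m)) ∈ U₁)
    (hx₀₂ : (x₀, ((k : ℝ) + 1) * Real.pi / (2 * m)) ∈ U₂) :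
    ∃ p ∈ {q : (ℝ × ℝ) × ℝ | q.1 ∈ U ∧
        (f q.1).re * Real.cos (m * q.2) + (f q.1).im * Real.sin (m * q.2) ≠ 0},
      U₁ ∪ U₂ ⊆ connectedComponentIn
        {q : (ℝ × ℝ) × ℝ | q.1 ∈ U ∧
          (f q.1).re * Real.cos (m * q.2) + (f q.1).im * Real.sin (m * q.2) ≠ 0} p := by
  set S : Set ((ℝ × ℝ) × ℝ) := {q : (ℝ × ℝ) × ℝ | q.1 ∈ U ∧
      (f q.1).re * Real.cos (m * q.2) + (f q.1).im * Real.sin (m * q.2) ≠ 0} with hS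
  set θ₁ : ℝ := (k : ℝ) * Real.pi / (2 * m) with hθ₁
  set θ₂ : ℝ := ((k : ℝ) + 1) * Real.pi / (2 * m) with hθ₂
  have hmR : (0 : ℝ) < m := by exact_mod_cast hm
  have hmne : (m : ℝ) ≠ 0 := ne_of_gt hmR
  have hπ := Real.pi_pos
  have hstep : (m : ℝ) * θ₂ = (m : ℝ) * θ₁ + Real.pi / 2 := by
    rw [hθ₁, hθ₂]; field_simp
  have hθle : θ₁ ≤ θ₂ := by
    have h2 : θ₂ - θ₁ = Real.pi / (2 * m) := by rw [hθ₁, hθ₂]; field_simp; ring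
    have : 0 < Real.pi / (2 * m) := by positivity
    linarith
  set a : ℝ := (f x₀).re
  set b : ℝ := (f x₀).im
  have hA : 0 < a * Real.cos ((m : ℝ) * θ₁) + b * Real.sin ((m : ℝ) * θ₁) :=
    hpos _ (Or.inl hx₀₁)
  have hB : 0 < a * Real.cos ((m : ℝ) * θ₂) + b * Real.sin ((m : ℝ) * θ₂) :=
    hpos _ (Or.inr hx₀₂)
  have hB' : 0 < -(a * Real.sin ((m : ℝ) * θ₁)) + b * Real.cos ((m : ℝ) * θ₁) := by
    rw [hstep, Real.cos_add_pi_div_two, Real.sin_add_pi_div_two] at hB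
    linarith
  -- positivity along the vertical segment
  have key : ∀ θ ∈ Set.Icc θ₁ θ₂,
      0 < a * Real.cos ((m : ℝ) * θ) + b * Real.sin ((m : ℝ) * θ) := by
    intro θ hθ
    set t : ℝ := (m : ℝ) * θ - (m : ℝ) * θ₁ with ht
    have ht0 : 0 ≤ t := by
      have := hθ.1; nlinarith
    have ht1 : t ≤ Real.pi / 2 := by
      have := hθ.2; nlinarith
    have hct : 0 ≤ Real.cos t :=
      Real.cos_nonneg_of_mem_Icc ⟨by linarith, ht1⟩
    have hst : 0 ≤ Real.sin t := Real.sin_nonneg_of_nonneg_of_le_pi ht0 (by linarith)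
    have hct1 : Real.cos t ≤ 1 := Real.cos_le_one t
    have hst1 : Real.sin t ≤ 1 := Real.sin_le_one t
    have hsq := Real.sin_sq_add_cos_sq t
    have hmθ : (m : ℝ) * θ = (m : ℝ) * θ₁ + t := by rw [ht]; ring
    have hcs : 1 ≤ Real.cos t + Real.sin t := by
      nlinarith [mul_nonneg hct (sub_nonneg.2 hct1), mul_nonneg hst (sub_nonneg.2 hst1)]
    rw [hmθ, Real.cos_add, Real.sin_add]
    linarith [aux_pos _ _ _ _ hA hB' hct hst hcs]
  set V : Set ((ℝ × ℝ) × ℝ) := {x₀} ×ˢ Set.Icc θ₁ θ₂ with hV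
  have hVS : V ⊆ S := by
    rintro ⟨x, θ⟩ ⟨hx, hθ⟩
    simp only [Set.mem_singleton_iff] at hx
    subst hx
    exact ⟨hx₀, ne_of_gt (key θ hθ)⟩
  have hU₁S : U₁ ⊆ S := fun p hp => ⟨(hU₁sub hp).1, ne_of_gt (hpos p (Or.inl hp))⟩
  have hU₂S : U₂ ⊆ S := fun p hp => ⟨(hU₂sub hp).1, ne_of_gt (hpos p (Or.inr hp))⟩
  have hVpre : IsPreconnected V :=
    isPreconnected_singleton.prod isPreconnected_Icc
  have hmem1V : ((x₀, θ₁) : (ℝ × ℝ) × ℝ) ∈ V :=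
    ⟨rfl, Set.left_mem_Icc.2 hθle⟩
  have hmem2V : ((x₀, θ₂) : (ℝ × ℝ) × ℝ) ∈ V :=
    ⟨rfl, Set.right_mem_Icc.2 hθle⟩
  have hW1 : IsPreconnected (U₁ ∪ V) :=
    hU₁conn.isPreconnected.union (x₀, θ₁) hx₀₁ hmem1V hVpre
  have hW : IsPreconnected ((U₁ ∪ V) ∪ U₂) :=
    hW1.union (x₀, θ₂) (Or.inr hmem2V) hx₀₂ hU₂conn.isPreconnected
  have hWS : (U₁ ∪ V) ∪ U₂ ⊆ S := by
    rintro p ((hp | hp) | hp)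
    · exact hU₁S hp
    · exact hVS hp
    · exact hU₂S hp
  refine ⟨(x₀, θ₁), hU₁S hx₀₁, fun p hp => ?_⟩
  have h := hW.subset_connectedComponentIn (Or.inl (Or.inl hx₀₁)) hWS
  rcases hp with hp | hp
  · exact h (Or.inl (Or.inl hp))
  · exact h (Or.inr hp)
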